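/- Suppose there exists an α-resolvable triple system TS(n,λ) whose blocks partition into s α-parallel classes, each containing t blocks (where an α-parallel class contains every point exactly α times). Then there exists a configuration (3,3) GDD(n,2,6; λt, α²s). -/

import Mathlib

/-- A group divisible design with two groups of size `n` (the points are
`Fin 2 × Fin n`, the first coordinate indicating the group), blocks of size `k`,
each point lying in `rep` blocks, every pair of distinct points in the same
group lying in exactly `l1` blocks, and every pair of points in different
groups lying in exactly `l2` blocks. -/
structure GDD (n k l1 l2 : ℕ) where
  blocks : Multiset (Finset (Fin 2 × Fin n))
  blockCard : ∀ B ∈ blocks, B.card = k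
  rep : ℕ
  pointRep : ∀ x : Fin 2 × Fin n,
    (blocks.filter fun B => x ∈ B).card = rep
  samePairs : ∀ x y : Fin 2 × Fin n, x ≠ y → x.1 = y.1 →
    (blocks.filter fun B => x ∈ B ∧ y ∈ B).card = l1
  crossPairs : ∀ x y : Fin 2 × Fin n, x.1 ≠ y.1 →
    (blocks.filter fun B => x ∈ B ∧ y ∈ B).card = l2

/-- The design has fixed block configuration `(s,t)`: every block meets one
group in exactly `s` points and the other group in exactly `t` points. -/
def GDD.HasConfig {n k l1 l2 : ℕ} (D : GDD n k l1 l2) (s t : ℕ) : Prop :=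
  ∀ B ∈ D.blocks,
    ((B.filter fun p => p.1 = 0).card = s ∧ (B.filter fun p => p.1 = 1).card = t) ∨
    ((B.filter fun p => p.1 = 0).card = t ∧ (B.filter fun p => p.1 = 1).card = s)

/-- A balanced incomplete block design `BIBD(n,k,lam)`: a collection of
`k`-element subsets (blocks) of an `n`-set such that every pair of distinct
points lies in exactly `lam` blocks. -/
structure BIBD (n k lam : ℕ) where
  blocks : Multiset (Finset (Fin n))
  blockCard : ∀ B ∈ blocks, B.card = k
  pairs : ∀ x y : Fin n, x ≠ y →
    (blocks.filter fun B => x ∈ B ∧ y ∈ B).card = lam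


lemma aux_filter_sum {ι α : Type*} (s : Finset ι) (f : ι → Multiset α)
    (p : α → Prop) [DecidablePred p] :
    (∑ i ∈ s, f i).filter p = ∑ i ∈ s, (f i).filter p := by
  induction s using Finset.cons_induction with
  | empty => simp
  | cons x s hx ih => simp [Finset.sum_cons, Multiset.filter_add, ih]

lemma aux_card_filter_bind {α β : Type*} (m : Multiset α) (f : α → Multiset β)
    (p : β → Prop) [DecidablePred p] :
    ((m.bind f).filter p).card = (m.map fun b => ((f b).filter p).card).sum := by
  induction m using Multiset.induction with
  | empty => simp
  | cons x m ih => simp [Multiset.cons_bind, Multiset.filter_add, ih]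

lemma aux_sum_map_ite {α : Type*} (m : Multiset α) (p : α → Prop) [DecidablePred p] (c : ℕ) :
    (m.map fun x => if p x then c else 0).sum = (m.filter p).card * c := by
  induction m using Multiset.induction with
  | empty => simp
  | cons x m ih =>
    by_cases h : p x <;> simp [Multiset.filter_cons, h, ih, add_mul, add_comm]

lemma aux_card_sum {ι α : Type*} (s : Finset ι) (f : ι → Multiset α) :
    Multiset.card (∑ i ∈ s, f i) = ∑ i ∈ s, Multiset.card (f i) := by
  induction s using Finset.cons_induction with
  | empty => simp
  | cons x s hx ih => simp [Finset.sum_cons, ih]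

theorem stmt_11 (n lam s t a : ℕ) (D : BIBD n 3 lam)
    (classes : Fin s → Multiset (Finset (Fin n)))
    (hpart : ∑ j, classes j = D.blocks)
    (ht : ∀ j, (classes j).card = t)
    (ha : ∀ j, ∀ x : Fin n, ((classes j).filter fun B => x ∈ B).card = a) :
    ∃ G : GDD n 6 (lam * t) (a ^ 2 * s), G.HasConfig 3 3 := by
  classical
  -- the paired block built from `B` (group 0) and `C` (group 1)
  set mk : Finset (Fin n) → Finset (Fin n) → Finset (Fin 2 × Fin n) :=
    fun B C => B.image (fun p => ((0 : Fin 2), p)) ∪ C.image (fun p => ((1 : Fin 2), p)) with hmk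
  have mem_mk : ∀ (B C : Finset (Fin n)) (x : Fin 2 × Fin n),
      x ∈ mk B C ↔ (x.1 = 0 ∧ x.2 ∈ B) ∨ (x.1 = 1 ∧ x.2 ∈ C) := by
    rintro B C ⟨i, u⟩
    simp only [hmk, Finset.mem_union, Finset.mem_image, Prod.mk.injEq]
    constructor
    · rintro (⟨p, hp, h0, h1⟩ | ⟨p, hp, h0, h1⟩)
      · exact Or.inl ⟨h0.symm, h1 ▸ hp⟩
      · exact Or.inr ⟨h0.symm, h1 ▸ hp⟩
    · rintro (⟨h0, h1⟩ | ⟨h0, h1⟩)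
      · exact Or.inl ⟨u, h1, h0.symm, rfl⟩
      · exact Or.inr ⟨u, h1, h0.symm, rfl⟩
  -- membership in a class implies membership in D.blocks
  have hmem : ∀ j, ∀ B ∈ classes j, B ∈ D.blocks := by
    intro j B hB
    rw [← hpart]
    exact Multiset.mem_sum.2 ⟨j, Finset.mem_univ j, hB⟩
  -- the two halves of mk B C
  have hfilter0 : ∀ B C : Finset (Fin n),
      ((mk B C).filter fun p => p.1 = 0) = B.image (fun p => ((0 : Fin 2), p)) := by
    intro B C
    ext ⟨i, u⟩
    simp only [Finset.mem_filter, mem_mk, Finset.mem_image, Prod.mk.injEq]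
    constructor
    · rintro ⟨(⟨h0, h1⟩ | ⟨h0, h1⟩), h2⟩
      · exact ⟨u, h1, h0.symm, rfl⟩
      · exact absurd (h0.symm.trans h2) (by decide)
    · rintro ⟨p, hp, h0, h1⟩
      exact ⟨Or.inl ⟨h0.symm, h1 ▸ hp⟩, h0.symm⟩
  have hfilter1 : ∀ B C : Finset (Fin n),
      ((mk B C).filter fun p => p.1 = 1) = C.image (fun p => ((1 : Fin 2), p)) := by
    intro B C
    ext ⟨i, u⟩
    simp only [Finset.mem_filter, mem_mk, Finset.mem_image, Prod.mk.injEq]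
    constructor
    · rintro ⟨(⟨h0, h1⟩ | ⟨h0, h1⟩), h2⟩
      · exact absurd (h0.symm.trans h2) (by decide)
      · exact ⟨u, h1, h0.symm, rfl⟩
    · rintro ⟨p, hp, h0, h1⟩
      exact ⟨Or.inr ⟨h0.symm, h1 ▸ hp⟩, h0.symm⟩
  have hinj0 : Function.Injective (fun p : Fin n => ((0 : Fin 2), p)) := by
    intro p q h; simpa using h
  have hinj1 : Function.Injective (fun p : Fin n => ((1 : Fin 2), p)) := by
    intro p q h; simpa using h
  have hcard0 : ∀ B C : Finset (Fin n), ((mk B C).filter fun p => p.1 = 0).card = B.card := by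
    intro B C; rw [hfilter0]; exact Finset.card_image_of_injective _ hinj0
  have hcard1 : ∀ B C : Finset (Fin n), ((mk B C).filter fun p => p.1 = 1).card = C.card := by
    intro B C; rw [hfilter1]; exact Finset.card_image_of_injective _ hinj1
  have hcardmk : ∀ B C : Finset (Fin n), (mk B C).card = B.card + C.card := by
    intro B C
    have h : (mk B C).card =
        ((mk B C).filter fun p => p.1 = 0).card + ((mk B C).filter fun p => ¬ p.1 = 0).card :=
      (Finset.card_filter_add_card_filter_not _).symm
    have h2 : ((mk B C).filter fun p => ¬ p.1 = 0) = ((mk B C).filter fun p => p.1 = 1) := by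
      apply Finset.filter_congr
      intro ⟨i, u⟩ _
      constructor
      · intro hi; omega
      · intro hi; omega
    rw [h, h2, hcard0, hcard1]
  -- the block multiset of the GDD
  set blocks : Multiset (Finset (Fin 2 × Fin n)) :=
    ∑ j, (classes j).bind (fun B => (classes j).map (mk B)) with hblocks
  -- counting lemma: card of filter over the full block multiset
  have key : ∀ (P : Finset (Fin 2 × Fin n) → Prop) [DecidablePred P],
      (blocks.filter P).card =
        ∑ j, ((classes j).map fun B =>
          (((classes j).map (mk B)).filter P).card).sum := by
    intro P _
    rw [hblocks, aux_filter_sum, aux_card_sum]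
    exact Finset.sum_congr rfl fun j _ => aux_card_filter_bind _ _ _
  -- general per-class count for product predicates
  have inner : ∀ (j : Fin s) (P Q : Finset (Fin n) → Prop)
      [DecidablePred P] [DecidablePred Q]
      (R : Finset (Fin 2 × Fin n) → Prop) [DecidablePred R],
      (∀ B ∈ classes j, ∀ C ∈ classes j, R (mk B C) ↔ P B ∧ Q C) →
      ((classes j).map fun B => (((classes j).map (mk B)).filter R).card).sum
        = ((classes j).filter P).card * ((classes j).filter Q).card := by
    intro j P Q _ _ R _ hR
    have step : ∀ B ∈ classes j,
        (((classes j).map (mk B)).filter R).card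
          = if P B then ((classes j).filter Q).card else 0 := by
      intro B hB
      rw [← Multiset.countP_eq_card_filter, Multiset.countP_map]
      by_cases hP : P B
      · simp only [hP, if_true]
        congr 1
        apply Multiset.filter_congr
        intro C hC
        rw [hR B hB C hC]
        simp [hP]
      · simp only [hP, if_false]
        rw [Multiset.card_eq_zero, Multiset.filter_eq_nil]
        intro C hC hRC
        exact hP ((hR B hB C hC).1 hRC).1
    rw [Multiset.map_congr rfl step, aux_sum_map_ite]
  -- every block of `blocks` is `mk B C` for some B, C in a common class
  have hblk : ∀ Bl ∈ blocks, ∃ j, ∃ B ∈ classes j, ∃ C ∈ classes j, Bl = mk B C := by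
    intro Bl hBl
    rw [hblocks] at hBl
    obtain ⟨j, _, hj⟩ := Multiset.mem_sum.1 hBl
    obtain ⟨B, hB, hj2⟩ := Multiset.mem_bind.1 hj
    obtain ⟨C, hC, rfl⟩ := Multiset.mem_map.1 hj2
    exact ⟨j, B, hB, C, hC, rfl⟩
  -- filter-true on a class has card t
  have hfiltTrue : ∀ j : Fin s, ((classes j).filter fun _ => True).card = t := by
    intro j
    rw [Multiset.filter_eq_self.2 fun _ _ => trivial]
    exact ht j
  -- sum over classes of pair counts equals lam
  have hpairsum : ∀ u v : Fin n, u ≠ v →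
      ∑ j, ((classes j).filter fun B => u ∈ B ∧ v ∈ B).card = lam := by
    intro u v huv
    have := D.pairs u v huv
    rw [← hpart, aux_filter_sum, aux_card_sum] at this
    exact this
  refine ⟨⟨blocks, ?_, s * (a * t), ?_, ?_, ?_⟩, ?_⟩
  · -- blockCard
    intro Bl hBl
    obtain ⟨j, B, hB, C, hC, rfl⟩ := hblk Bl hBl
    rw [hcardmk, D.blockCard B (hmem j B hB), D.blockCard C (hmem j C hC)]
  · -- pointRep
    rintro ⟨i, u⟩
    have hi : i = 0 ∨ i = 1 := by omega
    rw [key]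
    rcases hi with rfl | rfl
    · have : ∀ j : Fin s,
          ((classes j).map fun B =>
            (((classes j).map (mk B)).filter fun Bl => (⟨0, u⟩ : Fin 2 × Fin n) ∈ Bl).card).sum
            = a * t := by
        intro j
        rw [inner j (fun B => u ∈ B) (fun _ => True) _ ?_, ha j u, hfiltTrue j]
        intro B _ C _
        rw [mem_mk]
        simp
      rw [Finset.sum_congr rfl fun j _ => this j]
      simp [Finset.sum_const, mul_comm]
    · have : ∀ j : Fin s,
          ((classes j).map fun B =>
            (((classes j).map (mk B)).filter fun Bl => (⟨1, u⟩ : Fin 2 × Fin n) ∈ Bl).card).sum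
            = t * a := by
        intro j
        rw [inner j (fun _ => True) (fun C => u ∈ C) _ ?_, ha j u, hfiltTrue j]
        intro B _ C _
        rw [mem_mk]
        simp
      rw [Finset.sum_congr rfl fun j _ => this j]
      simp [Finset.sum_const, mul_comm]
  · -- samePairs
    rintro ⟨i, u⟩ ⟨i', v⟩ hne heq
    have hii : i = i' := heq
    subst hii
    have huv : u ≠ v := fun h => hne (by rw [h])
    have hi : i = 0 ∨ i = 1 := by omega
    rw [key]
    rcases hi with rfl | rfl
    · have : ∀ j : Fin s,
          ((classes j).map fun B =>
            (((classes j).map (mk B)).filter fun Bl =>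
              (⟨0, u⟩ : Fin 2 × Fin n) ∈ Bl ∧ (⟨0, v⟩ : Fin 2 × Fin n) ∈ Bl).card).sum
            = ((classes j).filter fun B => u ∈ B ∧ v ∈ B).card * t := by
        intro j
        rw [inner j (fun B => u ∈ B ∧ v ∈ B) (fun _ => True) _ ?_, hfiltTrue j]
        intro B _ C _
        rw [mem_mk, mem_mk]
        simp [and_assoc]
      rw [Finset.sum_congr rfl fun j _ => this j, ← Finset.sum_mul, hpairsum u v huv]
    · have : ∀ j : Fin s,
          ((classes j).map fun B =>
            (((classes j).map (mk B)).filter fun Bl =>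
              (⟨1, u⟩ : Fin 2 × Fin n) ∈ Bl ∧ (⟨1, v⟩ : Fin 2 × Fin n) ∈ Bl).card).sum
            = t * ((classes j).filter fun C => u ∈ C ∧ v ∈ C).card := by
        intro j
        rw [inner j (fun _ => True) (fun C => u ∈ C ∧ v ∈ C) _ ?_, hfiltTrue j]
        intro B _ C _
        rw [mem_mk, mem_mk]
        simp
      rw [Finset.sum_congr rfl fun j _ => this j, ← Finset.mul_sum, hpairsum u v huv,
        mul_comm]
  · -- crossPairs
    rintro ⟨i, u⟩ ⟨i', v⟩ hne
    simp only at hne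
    have cross01 : ∀ u v : Fin n,
        (blocks.filter fun Bl =>
          (⟨0, u⟩ : Fin 2 × Fin n) ∈ Bl ∧ (⟨1, v⟩ : Fin 2 × Fin n) ∈ Bl).card = a ^ 2 * s := by
      intro u v
      rw [key]
      have : ∀ j : Fin s,
          ((classes j).map fun B =>
            (((classes j).map (mk B)).filter fun Bl =>
              (⟨0, u⟩ : Fin 2 × Fin n) ∈ Bl ∧ (⟨1, v⟩ : Fin 2 × Fin n) ∈ Bl).card).sum
            = a * a := by
        intro j
        rw [inner j (fun B => u ∈ B) (fun C => v ∈ C) _ ?_, ha j u, ha j v]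
        intro B _ C _
        rw [mem_mk, mem_mk]
        simp
      rw [Finset.sum_congr rfl fun j _ => this j]
      simp [Finset.sum_const, Finset.card_univ, sq, mul_comm]
    have cross10 : ∀ u v : Fin n,
        (blocks.filter fun Bl =>
          (⟨1, u⟩ : Fin 2 × Fin n) ∈ Bl ∧ (⟨0, v⟩ : Fin 2 × Fin n) ∈ Bl).card = a ^ 2 * s := by
      intro u v
      have : (blocks.filter fun Bl =>
          (⟨1, u⟩ : Fin 2 × Fin n) ∈ Bl ∧ (⟨0, v⟩ : Fin 2 × Fin n) ∈ Bl)
          = blocks.filter fun Bl =>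
          (⟨0, v⟩ : Fin 2 × Fin n) ∈ Bl ∧ (⟨1, u⟩ : Fin 2 × Fin n) ∈ Bl := by
        apply Multiset.filter_congr
        intro Bl _
        exact and_comm
      rw [this, cross01]
    have hi : i = 0 ∨ i = 1 := by omega
    have hi' : i' = 0 ∨ i' = 1 := by omega
    rcases hi with rfl | rfl <;> rcases hi' with rfl | rfl
    · exact absurd rfl hne
    · exact cross01 u v
    · exact cross10 u v
    · exact absurd rfl hne
  · -- HasConfig
    intro Bl hBl
    obtain ⟨j, B, hB, C, hC, rfl⟩ := hblk Bl hBl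
    left
    rw [hcard0, hcard1, D.blockCard B (hmem j B hB), D.blockCard C (hmem j C hC)]
    exact ⟨rfl, rfl⟩
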